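/- For every n ≥ 1: x and y are point independent in T^point_n, and x and y are not point independent in T'^point_n. -/
import Mathlib


/-- The alphabet `{x, y}`. -/
inductive XY : Type where
  | x : XY
  | y : XY
deriving DecidableEq

/-- The valuation with `x ↦ b₁`, `y ↦ b₂`. -/
def vXY (b₁ b₂ : Bool) : XY → Bool
  | .x => b₁
  | .y => b₂

/-- The trace that carries the valuation `v` on positions `start ≤ i < start + len`
and the all-false valuation `00` elsewhere. -/
def blockTr (v : XY → Bool) (start len : ℕ) : ℕ → XY → Bool :=
  fun i => if start ≤ i ∧ i < start + len then v else fun _ => false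

/-- `E_n = {(11)^{n+2}(00)^ω} ∪ ⋃_{0≤j<n} {(00)^j 10 (00)^ω, (00)^j 01 (00)^ω}`. -/
def En (n : ℕ) : Set (ℕ → XY → Bool) :=
  {τ | τ = blockTr (vXY true true) 0 (n + 2) ∨
       ∃ j, j < n ∧ (τ = blockTr (vXY true false) j 1 ∨ τ = blockTr (vXY false true) j 1)}

/-- `T^point_n = E_n ∪ {(00)^n 10 10 (00)^ω, (00)^n 01 01 (00)^ω}`. -/
def Tpoint (n : ℕ) : Set (ℕ → XY → Bool) :=
  En n ∪ {blockTr (vXY true false) n 2, blockTr (vXY false true) n 2}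

/-- `T'^point_n = E_n ∪ {(00)^n 10 00 (00)^ω, (00)^n 01 00 (00)^ω}`. -/
def Tpoint' (n : ℕ) : Set (ℕ → XY → Bool) :=
  En n ∪ {blockTr (vXY true false) n 1, blockTr (vXY false true) n 1}

/-- `x` and `y` are point independent in `T`. -/
def PointIndep (u w : XY) (T : Set (ℕ → XY → Bool)) : Prop :=
  ∀ i : ℕ, ∀ τ ∈ T, ∀ τ' ∈ T, ∃ τ'' ∈ T, τ'' i u = τ i u ∧ τ'' i w = τ' i w

lemma blockTr_in (v : XY → Bool) (s l i : ℕ) (h : s ≤ i ∧ i < s + l) :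
    blockTr v s l i = v := if_pos h

lemma blockTr_out (v : XY → Bool) (s l i : ℕ) (h : ¬ (s ≤ i ∧ i < s + l)) :
    blockTr v s l i = fun _ => false := if_neg h

lemma mem_Tpoint'_eq (n : ℕ) (τ : ℕ → XY → Bool) (h : τ ∈ Tpoint' n) :
    τ (n+1) XY.x = τ (n+1) XY.y := by
  rcases h with (h | ⟨j, hj, (h | h)⟩) | (h | h) <;> subst h
  · rw [blockTr_in _ _ _ _ (by omega)]; rfl
  · rw [blockTr_out _ _ _ _ (by omega)]
  · rw [blockTr_out _ _ _ _ (by omega)]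
  · rw [blockTr_out _ _ _ _ (by omega)]
  · rw [blockTr_out _ _ _ _ (by omega)]

lemma mem_Tpoint_tail (n : ℕ) (τ : ℕ → XY → Bool) (h : τ ∈ Tpoint n) (i : ℕ)
    (hi : n + 2 ≤ i) : τ i = fun _ => false := by
  rcases h with (h | ⟨j, hj, (h | h)⟩) | (h | h) <;> subst h <;>
    exact blockTr_out _ _ _ _ (by omega)

/-- For every `n ≥ 1`: `x` and `y` are point independent in
`T^point_n`, and not point independent in `T'^point_n`. -/
theorem Tpoint_pointIndep_and_Tpoint'_not (n : ℕ) (hn : 1 ≤ n) :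
    PointIndep XY.x XY.y (Tpoint n) ∧ ¬ PointIndep XY.x XY.y (Tpoint' n) := by
  have hA : blockTr (vXY true true) 0 (n+2) ∈ Tpoint n := Or.inl (Or.inl rfl)
  have hP : blockTr (vXY true false) n 2 ∈ Tpoint n := Or.inr (Or.inl rfl)
  have hQ : blockTr (vXY false true) n 2 ∈ Tpoint n := Or.inr (Or.inr rfl)
  have hB : ∀ j, j < n → blockTr (vXY true false) j 1 ∈ Tpoint n :=
    fun j hj => Or.inl (Or.inr ⟨j, hj, Or.inl rfl⟩)
  have hC : ∀ j, j < n → blockTr (vXY false true) j 1 ∈ Tpoint n :=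
    fun j hj => Or.inl (Or.inr ⟨j, hj, Or.inr rfl⟩)
  constructor
  · intro i τ hτ τ' hτ'
    by_cases hi : i < n + 2
    · rcases Bool.eq_false_or_eq_true (τ i XY.x) with ha | ha <;>
        rcases Bool.eq_false_or_eq_true (τ' i XY.y) with hb | hb
      · -- true, true
        refine ⟨_, hA, ?_, ?_⟩
        · rw [ha, blockTr_in _ _ _ _ (by omega)]; rfl
        · rw [hb, blockTr_in _ _ _ _ (by omega)]; rfl
      · -- true, false
        by_cases hin : i < n
        · refine ⟨_, hB i hin, ?_, ?_⟩
          · rw [ha, blockTr_in _ _ _ _ (by omega)]; rfl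
          · rw [hb, blockTr_in _ _ _ _ (by omega)]; rfl
        · refine ⟨_, hP, ?_, ?_⟩
          · rw [ha, blockTr_in _ _ _ _ (by omega)]; rfl
          · rw [hb, blockTr_in _ _ _ _ (by omega)]; rfl
      · -- false, true
        by_cases hin : i < n
        · refine ⟨_, hC i hin, ?_, ?_⟩
          · rw [ha, blockTr_in _ _ _ _ (by omega)]; rfl
          · rw [hb, blockTr_in _ _ _ _ (by omega)]; rfl
        · refine ⟨_, hQ, ?_, ?_⟩
          · rw [ha, blockTr_in _ _ _ _ (by omega)]; rfl
          · rw [hb, blockTr_in _ _ _ _ (by omega)]; rfl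
      · -- false, false
        rcases Nat.eq_zero_or_pos i with h0 | h0
        · refine ⟨_, hP, ?_, ?_⟩
          · rw [ha, blockTr_out _ _ _ _ (by omega)]
          · rw [hb, blockTr_out _ _ _ _ (by omega)]
        · refine ⟨_, hB 0 (by omega), ?_, ?_⟩
          · rw [ha, blockTr_out _ _ _ _ (by omega)]
          · rw [hb, blockTr_out _ _ _ _ (by omega)]
    · refine ⟨τ, hτ, rfl, ?_⟩
      rw [mem_Tpoint_tail n τ hτ i (by omega), mem_Tpoint_tail n τ' hτ' i (by omega)]
  · intro h
    obtain ⟨τ'', hmem, h1, h2⟩ :=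
      h (n+1) (blockTr (vXY true true) 0 (n+2)) (Or.inl (Or.inl rfl))
        (blockTr (vXY true false) n 1) (Or.inr (Or.inl rfl))
    rw [blockTr_in _ _ _ _ (by omega)] at h1
    rw [blockTr_out _ _ _ _ (by omega)] at h2
    have := mem_Tpoint'_eq n τ'' hmem
    rw [h1, h2] at this
    simp [vXY] at this
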